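/- For every integer n ≥ 2, (P_n / P_{n-1})^(n(n+1)) > P_n^2 · (P_{n+1} / P_n)^(n(n-1)). -/

import Mathlib

set_option maxHeartbeats 1600000

theorem Pn_ratio_power_ineq (P : ℕ → ℝ)
    (hP0 : P 0 = 1) (hP1 : P 1 = 8)
    (hPrec : ∀ n : ℕ, 1 ≤ n →
      ((n : ℝ) + 1) ^ 2 * P (n + 1)
        = 8 * (3 * (n : ℝ) ^ 2 + 3 * (n : ℝ) + 1) * P n - 128 * (n : ℝ) ^ 2 * P (n - 1))
    (hPpos : ∀ n : ℕ, 0 < P n) :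
    ∀ n : ℕ, 2 ≤ n →
      (P n / P (n - 1)) ^ (n * (n + 1)) > P n ^ 2 * (P (n + 1) / P n) ^ (n * (n - 1)) := by
  -- explicit small values
  have hP2 : P 2 = 80 := by
    have h := hPrec 1 (by norm_num)
    norm_num [hP0, hP1] at h
    linarith
  have hP3 : P 3 = 896 := by
    have h := hPrec 2 (by norm_num)
    norm_num [hP1, hP2] at h
    linarith
  have hP4 : P 4 = 10816 := by
    have h := hPrec 3 (by norm_num)
    norm_num [hP2, hP3] at h
    linarith
  have hP5 : P 5 = 137728 := by
    have h := hPrec 4 (by norm_num)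
    norm_num [hP3, hP4] at h
    linarith
  have hP6 : P 6 = 1823744 := by
    have h := hPrec 5 (by norm_num)
    norm_num [hP4, hP5] at h
    linarith
  have hP7 : P 7 = 24862720 := by
    have h := hPrec 6 (by norm_num)
    norm_num [hP5, hP6] at h
    linarith
  have hP8 : P 8 = 346498048 := by
    have h := hPrec 7 (by norm_num)
    norm_num [hP6, hP7] at h
    linarith
  have hP9 : P 9 = 4911669248 := by
    have h := hPrec 8 (by norm_num)
    norm_num [hP7, hP8] at h
    linarith
  have hP10 : P 10 = 70560071680 := by
    have h := hPrec 9 (by norm_num)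
    norm_num [hP8, hP9] at h
    linarith
  -- ratio bounds lemma
  have hbnd : ∀ m : ℕ, 9 ≤ m →
      (16*(m:ℝ)^3 - 16*(m:ℝ)^2 - 35) * P (m-1) ≤ (m:ℝ)^3 * P m ∧
      (m:ℝ)^3 * P m ≤ (16*(m:ℝ)^3 - 16*(m:ℝ)^2 + 16) * P (m-1) := by
    intro m hm
    induction m, hm using Nat.le_induction with
    | base =>
      refine ⟨by norm_num [hP8, hP9], by norm_num [hP8, hP9]⟩
    | succ n hn ih =>
      have hx : (9:ℝ) ≤ (n:ℝ) := by exact_mod_cast hn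
      have hrec := hPrec n (by omega)
      simp only [Nat.add_sub_cancel] at *
      push_cast
      set x : ℝ := (n:ℝ) with hxdef
      have hp := hPpos (n-1)
      have hq := hPpos n
      have h9 : (0:ℝ) ≤ x - 9 := by linarith
      have hA : (0:ℝ) < 16*x^3-16*x^2-35 := by nlinarith
      have hB : (0:ℝ) < 16*x^3-16*x^2+16 := by nlinarith
      have h1 : (0:ℝ) ≤ x^3 * P n - (16*x^3-16*x^2-35) * P (n-1) := by linarith [ih.1]
      have h2 : (0:ℝ) ≤ (16*x^3-16*x^2+16) * P (n-1) - x^3 * P n := by linarith [ih.2]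
      constructor
      · have e : (16*x^3-16*x^2-35) * ((x+1)^3 * P (n+1) - (16*(x+1)^3-16*(x+1)^2-35) * P n)
            = 128*x^2*(x+1) * (x^3 * P n - (16*x^3-16*x^2-35) * P (n-1))
              + (3175 + 13912*(x-9) + 2856*(x-9)^2 + 152*(x-9)^3) * P n := by
          linear_combination ((16*x^3-16*x^2-35)*(x+1)) * hrec
        have hG : (0:ℝ) ≤ 3175 + 13912*(x-9) + 2856*(x-9)^2 + 152*(x-9)^3 := by nlinarith [pow_nonneg h9 2, pow_nonneg h9 3, pow_nonneg h9 4, pow_nonneg h9 5, pow_nonneg h9 6, pow_nonneg h9 7]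
        have hcoef : (0:ℝ) ≤ 128*x^2*(x+1) := by positivity
        have hsum : (0:ℝ) ≤ (16*x^3-16*x^2-35) * ((x+1)^3 * P (n+1) - (16*(x+1)^3-16*(x+1)^2-35) * P n) := by
          rw [e]
          exact add_nonneg (mul_nonneg hcoef h1) (mul_nonneg hG hq.le)
        nlinarith [hsum, hA]
      · have e : (16*x^3-16*x^2+16) * ((16*(x+1)^3-16*(x+1)^2+16) * P n - (x+1)^3 * P (n+1))
            = 128*x^2*(x+1) * ((16*x^3-16*x^2+16) * P (n-1) - x^3 * P n)
              + (153344 + 55040*(x-9) + 6528*(x-9)^2 + 256*(x-9)^3) * P n := by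
          linear_combination (-(16*x^3-16*x^2+16)*(x+1)) * hrec
        have hG : (0:ℝ) ≤ 153344 + 55040*(x-9) + 6528*(x-9)^2 + 256*(x-9)^3 := by nlinarith [pow_nonneg h9 2, pow_nonneg h9 3, pow_nonneg h9 4, pow_nonneg h9 5, pow_nonneg h9 6, pow_nonneg h9 7]
        have hcoef : (0:ℝ) ≤ 128*x^2*(x+1) := by positivity
        have hsum : (0:ℝ) ≤ (16*x^3-16*x^2+16) * ((16*(x+1)^3-16*(x+1)^2+16) * P n - (x+1)^3 * P (n+1)) := by
          rw [e]
          exact add_nonneg (mul_nonneg hcoef h2) (mul_nonneg hG hq.le)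
        nlinarith [hsum, hB]
  -- ratio log-concavity
  have hC : ∀ n : ℕ, 1 ≤ n → P n ^ 3 * P (n+2) ≤ P (n+1) ^ 3 * P (n-1) := by
    intro n hn
    rcases lt_or_ge n 9 with h | h
    · interval_cases n <;>
        norm_num [hP0, hP1, hP2, hP3, hP4, hP5, hP6, hP7, hP8, hP9, hP10]
    · have hx : (9:ℝ) ≤ (n:ℝ) := by exact_mod_cast h
      have rec1 := hPrec n (by omega)
      have rec2 := hPrec (n+1) (by omega)
      have hb := hbnd (n+1) (by omega)
      simp only [Nat.add_sub_cancel] at rec2 hb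
      push_cast at rec2 hb ⊢
      set x : ℝ := (n:ℝ) with hxdef
      have hp := hPpos (n-1)
      have hq := hPpos n
      have hs := hPpos (n+1)
      have ht := hPpos (n+2)
      have h9 : (0:ℝ) ≤ x - 9 := by linarith
      have hU : (0:ℝ) ≤ (x+1)^3 * P (n+1) - (16*(x+1)^3-16*(x+1)^2-35) * P n := by
        linarith [hb.1]
      have hV : (0:ℝ) ≤ (16*(x+1)^3-16*(x+1)^2+16) * P n - (x+1)^3 * P (n+1) := by
        linarith [hb.2]
      have hAm : (0:ℝ) ≤ 16*(x+1)^3-16*(x+1)^2-35 := by nlinarith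
      have hfA : (0:ℝ) ≤ 698484502449437500 + 925290069180212500*(x-9) + 565289028719196875*(x-9)^2 + 210894845398190750*(x-9)^3 + 53608193116778375*(x-9)^4 + 9805017608879600*(x-9)^5 + 1327606020811400*(x-9)^6 + 134742982219960*(x-9)^7 + 10251234847360*(x-9)^8 + 577431875072*(x-9)^9 + 23407881856*(x-9)^10 + 646713344*(x-9)^11 + 10914816*(x-9)^12 + 84992*(x-9)^13 := by nlinarith [pow_nonneg h9 2, pow_nonneg h9 3, pow_nonneg h9 4, pow_nonneg h9 5, pow_nonneg h9 6, pow_nonneg h9 7, pow_nonneg h9 8, pow_nonneg h9 9, pow_nonneg h9 10, pow_nonneg h9 11, pow_nonneg h9 12, pow_nonneg h9 13]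
      have hfB : (0:ℝ) ≤ 253929040995942400 + 336684337366958080*(x-9) + 206033206735929344*(x-9)^2 + 77049001842999296*(x-9)^3 + 19645357052887040*(x-9)^4 + 3606441474228224*(x-9)^5 + 490406755008512*(x-9)^6 + 50013380313088*(x-9)^7 + 3825309220864*(x-9)^8 + 216720785408*(x-9)^9 + 8840003584*(x-9)^10 + 245841920*(x-9)^11 + 4177920*(x-9)^12 + 32768*(x-9)^13 := by nlinarith [pow_nonneg h9 2, pow_nonneg h9 3, pow_nonneg h9 4, pow_nonneg h9 5, pow_nonneg h9 6, pow_nonneg h9 7, pow_nonneg h9 8, pow_nonneg h9 9, pow_nonneg h9 10, pow_nonneg h9 11, pow_nonneg h9 12, pow_nonneg h9 13]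
      have hRA : (0:ℝ) ≤ 188614844540100 + 190197911433420*(x-9) + 86201538516981*(x-9)^2 + 23125122548154*(x-9)^3 + 4066873958385*(x-9)^4 + 489950117856*(x-9)^5 + 40952741328*(x-9)^6 + 2345250096*(x-9)^7 + 88069248*(x-9)^8 + 1958400*(x-9)^9 + 19584*(x-9)^10 := by nlinarith [pow_nonneg h9 2, pow_nonneg h9 3, pow_nonneg h9 4, pow_nonneg h9 5, pow_nonneg h9 6, pow_nonneg h9 7, pow_nonneg h9 8, pow_nonneg h9 9, pow_nonneg h9 10]
      have hr1 : (0:ℝ) ≤ 4382027100 + 3050504820*(x-9) + 908452851*(x-9)^2 + 150053934*(x-9)^3 + 14849007*(x-9)^4 + 880464*(x-9)^5 + 28968*(x-9)^6 + 408*(x-9)^7 := by nlinarith [pow_nonneg h9 2, pow_nonneg h9 3, pow_nonneg h9 4, pow_nonneg h9 5, pow_nonneg h9 6, pow_nonneg h9 7]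
      have hr2 : (0:ℝ) ≤ 617100 + 235620*(x-9) + 33711*(x-9)^2 + 2142*(x-9)^3 + 51*(x-9)^4 := by nlinarith [pow_nonneg h9 2, pow_nonneg h9 3, pow_nonneg h9 4]
      have t1 : (0:ℝ) ≤ ((16*(x+1)^3-16*(x+1)^2+16) * P n - (x+1)^3 * P (n+1)) * P n ^ 3 * (698484502449437500 + 925290069180212500*(x-9) + 565289028719196875*(x-9)^2 + 210894845398190750*(x-9)^3 + 53608193116778375*(x-9)^4 + 9805017608879600*(x-9)^5 + 1327606020811400*(x-9)^6 + 134742982219960*(x-9)^7 + 10251234847360*(x-9)^8 + 577431875072*(x-9)^9 + 23407881856*(x-9)^10 + 646713344*(x-9)^11 + 10914816*(x-9)^12 + 84992*(x-9)^13) :=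
        mul_nonneg (mul_nonneg hV (by positivity)) hfA
      have t2 : (0:ℝ) ≤ ((x+1)^3 * P (n+1) - (16*(x+1)^3-16*(x+1)^2-35) * P n) * P n ^ 3 * (253929040995942400 + 336684337366958080*(x-9) + 206033206735929344*(x-9)^2 + 77049001842999296*(x-9)^3 + 19645357052887040*(x-9)^4 + 3606441474228224*(x-9)^5 + 490406755008512*(x-9)^6 + 50013380313088*(x-9)^7 + 3825309220864*(x-9)^8 + 216720785408*(x-9)^9 + 8840003584*(x-9)^10 + 245841920*(x-9)^11 + 4177920*(x-9)^12 + 32768*(x-9)^13) :=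
        mul_nonneg (mul_nonneg hU (by positivity)) hfB
      have t3 : (0:ℝ) ≤ ((x+1)^3 * P (n+1) - (16*(x+1)^3-16*(x+1)^2-35) * P n)
          * (((16*(x+1)^3-16*(x+1)^2+16) * P n - (x+1)^3 * P (n+1))
          * ((188614844540100 + 190197911433420*(x-9) + 86201538516981*(x-9)^2 + 23125122548154*(x-9)^3 + 4066873958385*(x-9)^4 + 489950117856*(x-9)^5 + 40952741328*(x-9)^6 + 2345250096*(x-9)^7 + 88069248*(x-9)^8 + 1958400*(x-9)^9 + 19584*(x-9)^10) * P n ^ 2)) :=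
        mul_nonneg hU (mul_nonneg hV (mul_nonneg hRA (by positivity)))
      have t4 : (0:ℝ) ≤ ((x+1)^3 * P (n+1) - (16*(x+1)^3-16*(x+1)^2-35) * P n)
          * (((16*(x+1)^3-16*(x+1)^2+16) * P n - (x+1)^3 * P (n+1))
          * (((x+1)^3 * P (n+1) - (16*(x+1)^3-16*(x+1)^2-35) * P n)
            * ((617100 + 235620*(x-9) + 33711*(x-9)^2 + 2142*(x-9)^3 + 51*(x-9)^4) * ((x+1)^3 * P (n+1) + (16*(x+1)^3-16*(x+1)^2-35) * P n) + (4382027100 + 3050504820*(x-9) + 908452851*(x-9)^2 + 150053934*(x-9)^3 + 14849007*(x-9)^4 + 880464*(x-9)^5 + 28968*(x-9)^6 + 408*(x-9)^7) * P n))) :=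
        mul_nonneg hU (mul_nonneg hV (mul_nonneg hU
          (add_nonneg (mul_nonneg hr2 (add_nonneg (by positivity) (mul_nonneg hAm hq.le)))
            (mul_nonneg hr1 hq.le))))
      have E : 51 * ((x+1)^12 * ((x+2)^2 * P (n+1) ^ 3 * (8*(3*x^2+3*x+1) * P n - (x+1)^2 * P (n+1))
            - 128*x^2 * P n ^ 3 * (8*(3*x^2+9*x+7) * P (n+1) - 128*(x+1)^2 * P n)))
          = ((16*(x+1)^3-16*(x+1)^2+16) * P n - (x+1)^3 * P (n+1)) * P n ^ 3 * (698484502449437500 + 925290069180212500*(x-9) + 565289028719196875*(x-9)^2 + 210894845398190750*(x-9)^3 + 53608193116778375*(x-9)^4 + 9805017608879600*(x-9)^5 + 1327606020811400*(x-9)^6 + 134742982219960*(x-9)^7 + 10251234847360*(x-9)^8 + 577431875072*(x-9)^9 + 23407881856*(x-9)^10 + 646713344*(x-9)^11 + 10914816*(x-9)^12 + 84992*(x-9)^13)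
            + ((x+1)^3 * P (n+1) - (16*(x+1)^3-16*(x+1)^2-35) * P n) * P n ^ 3 * (253929040995942400 + 336684337366958080*(x-9) + 206033206735929344*(x-9)^2 + 77049001842999296*(x-9)^3 + 19645357052887040*(x-9)^4 + 3606441474228224*(x-9)^5 + 490406755008512*(x-9)^6 + 50013380313088*(x-9)^7 + 3825309220864*(x-9)^8 + 216720785408*(x-9)^9 + 8840003584*(x-9)^10 + 245841920*(x-9)^11 + 4177920*(x-9)^12 + 32768*(x-9)^13)
            + ((x+1)^3 * P (n+1) - (16*(x+1)^3-16*(x+1)^2-35) * P n)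
              * (((16*(x+1)^3-16*(x+1)^2+16) * P n - (x+1)^3 * P (n+1))
              * ((188614844540100 + 190197911433420*(x-9) + 86201538516981*(x-9)^2 + 23125122548154*(x-9)^3 + 4066873958385*(x-9)^4 + 489950117856*(x-9)^5 + 40952741328*(x-9)^6 + 2345250096*(x-9)^7 + 88069248*(x-9)^8 + 1958400*(x-9)^9 + 19584*(x-9)^10) * P n ^ 2))
            + ((x+1)^3 * P (n+1) - (16*(x+1)^3-16*(x+1)^2-35) * P n)
              * (((16*(x+1)^3-16*(x+1)^2+16) * P n - (x+1)^3 * P (n+1))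
              * (((x+1)^3 * P (n+1) - (16*(x+1)^3-16*(x+1)^2-35) * P n)
                * ((617100 + 235620*(x-9) + 33711*(x-9)^2 + 2142*(x-9)^3 + 51*(x-9)^4) * ((x+1)^3 * P (n+1) + (16*(x+1)^3-16*(x+1)^2-35) * P n) + (4382027100 + 3050504820*(x-9) + 908452851*(x-9)^2 + 150053934*(x-9)^3 + 14849007*(x-9)^4 + 880464*(x-9)^5 + 28968*(x-9)^6 + 408*(x-9)^7) * P n))) := by
        ring
      have h51 : (0:ℝ) ≤ 51 * ((x+1)^12 * ((x+2)^2 * P (n+1) ^ 3 * (8*(3*x^2+3*x+1) * P n - (x+1)^2 * P (n+1))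
            - 128*x^2 * P n ^ 3 * (8*(3*x^2+9*x+7) * P (n+1) - 128*(x+1)^2 * P n))) := by
        rw [E]; linarith [t1, t2, t3, t4]
      have h51' : (0:ℝ) ≤ (x+1)^12 * ((x+2)^2 * P (n+1) ^ 3 * (8*(3*x^2+3*x+1) * P n - (x+1)^2 * P (n+1))
            - 128*x^2 * P n ^ 3 * (8*(3*x^2+9*x+7) * P (n+1) - 128*(x+1)^2 * P n)) := by
        linarith [h51]
      have hT : (0:ℝ) ≤ (x+2)^2 * P (n+1) ^ 3 * (8*(3*x^2+3*x+1) * P n - (x+1)^2 * P (n+1))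
            - 128*x^2 * P n ^ 3 * (8*(3*x^2+9*x+7) * P (n+1) - 128*(x+1)^2 * P n) :=
        (mul_nonneg_iff_of_pos_left (by positivity : (0:ℝ) < (x+1)^12)).mp h51'
      have rec1' : 128*x^2 * P (n-1) = 8*(3*x^2+3*x+1) * P n - (x+1)^2 * P (n+1) := by
        linarith [rec1]
      have rec2' : (x+2)^2 * P (n+2) = 8*(3*x^2+9*x+7) * P (n+1) - 128*(x+1)^2 * P n := by
        have h11 : n + 1 + 1 = n + 2 := rfl
        rw [h11] at rec2
        linarith [rec2]
      have e2 : 128*x^2*(x+2)^2 * (P (n+1) ^ 3 * P (n-1) - P n ^ 3 * P (n+2))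
          = (x+2)^2 * P (n+1) ^ 3 * (8*(3*x^2+3*x+1) * P n - (x+1)^2 * P (n+1))
            - 128*x^2 * P n ^ 3 * (8*(3*x^2+9*x+7) * P (n+1) - 128*(x+1)^2 * P n) := by
        linear_combination ((x+2)^2 * P (n+1) ^ 3) * rec1' - (128*x^2 * P n ^ 3) * rec2'
      have e2' : (0:ℝ) ≤ 128*x^2*(x+2)^2 * (P (n+1) ^ 3 * P (n-1) - P n ^ 3 * P (n+2)) := by
        rw [e2]; exact hT
      have hfinal := (mul_nonneg_iff_of_pos_left
        (by positivity : (0:ℝ) < 128*x^2*(x+2)^2)).mp e2'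
      linarith [hfinal]
  -- main inequality in product form, by induction
  have hQ : ∀ m : ℕ, P (m+1) ^ ((m+2)*(m+3)) * P (m+3) ^ ((m+2)*(m+1)) < P (m+2) ^ (2*m^2+8*m+6) := by
    intro m
    induction m with
    | zero =>
      norm_num [hP1, hP2, hP3]
    | succ k ih =>
      have hc := hC (k+2) (by omega)
      have hc' : (P (k+2) ^ 3 * P (k+4)) ^ ((k+2)*(k+3)) ≤ (P (k+3) ^ 3 * P (k+1)) ^ ((k+2)*(k+3)) := by
        apply pow_le_pow_left₀ (mul_nonneg (pow_nonneg (hPpos _).le 3) (hPpos _).le) _ _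
        exact hc
      have step1 : (P (k+1) ^ ((k+2)*(k+3)) * P (k+3) ^ ((k+2)*(k+1))) * (P (k+2) ^ 3 * P (k+4)) ^ ((k+2)*(k+3))
          < P (k+2) ^ (2*k^2+8*k+6) * (P (k+3) ^ 3 * P (k+1)) ^ ((k+2)*(k+3)) := by
        have a1 : (P (k+1) ^ ((k+2)*(k+3)) * P (k+3) ^ ((k+2)*(k+1))) * (P (k+2) ^ 3 * P (k+4)) ^ ((k+2)*(k+3))
            ≤ (P (k+1) ^ ((k+2)*(k+3)) * P (k+3) ^ ((k+2)*(k+1))) * (P (k+3) ^ 3 * P (k+1)) ^ ((k+2)*(k+3)) :=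
          mul_le_mul_of_nonneg_left hc' (mul_nonneg (pow_nonneg (hPpos _).le _) (pow_nonneg (hPpos _).le _))
        have a2 : (P (k+1) ^ ((k+2)*(k+3)) * P (k+3) ^ ((k+2)*(k+1))) * (P (k+3) ^ 3 * P (k+1)) ^ ((k+2)*(k+3))
            < P (k+2) ^ (2*k^2+8*k+6) * (P (k+3) ^ 3 * P (k+1)) ^ ((k+2)*(k+3)) :=
          mul_lt_mul_of_pos_right ih (pow_pos (mul_pos (pow_pos (hPpos _) 3) (hPpos _)) _)
        exact lt_of_le_of_lt a1 a2
      have hZ : (0:ℝ) < P (k+1) ^ ((k+2)*(k+3)) * P (k+3) ^ ((k+2)*(k+1)) * P (k+2) ^ (2*k^2+8*k+6) :=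
        mul_pos (mul_pos (pow_pos (hPpos _) _) (pow_pos (hPpos _) _)) (pow_pos (hPpos _) _)
      have goal' : (P (k+2) ^ ((k+3)*(k+4)) * P (k+4) ^ ((k+3)*(k+2)))
            * (P (k+1) ^ ((k+2)*(k+3)) * P (k+3) ^ ((k+2)*(k+1)) * P (k+2) ^ (2*k^2+8*k+6))
          < (P (k+3) ^ (2*(k+1)^2+8*(k+1)+6))
            * (P (k+1) ^ ((k+2)*(k+3)) * P (k+3) ^ ((k+2)*(k+1)) * P (k+2) ^ (2*k^2+8*k+6)) := by
        calc (P (k+2) ^ ((k+3)*(k+4)) * P (k+4) ^ ((k+3)*(k+2)))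
              * (P (k+1) ^ ((k+2)*(k+3)) * P (k+3) ^ ((k+2)*(k+1)) * P (k+2) ^ (2*k^2+8*k+6))
            = (P (k+1) ^ ((k+2)*(k+3)) * P (k+3) ^ ((k+2)*(k+1))) * (P (k+2) ^ 3 * P (k+4)) ^ ((k+2)*(k+3)) := by
              ring
          _ < P (k+2) ^ (2*k^2+8*k+6) * (P (k+3) ^ 3 * P (k+1)) ^ ((k+2)*(k+3)) := step1
          _ = (P (k+3) ^ (2*(k+1)^2+8*(k+1)+6))
              * (P (k+1) ^ ((k+2)*(k+3)) * P (k+3) ^ ((k+2)*(k+1)) * P (k+2) ^ (2*k^2+8*k+6)) := by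
              ring
      have := lt_of_mul_lt_mul_right goal' hZ.le
      convert this using 2 <;> first | ring_nf | omega
  -- conclude
  intro n hn
  obtain ⟨m, rfl⟩ : ∃ m, n = m + 2 := ⟨n - 2, by omega⟩
  have hsub : m + 2 - 1 = m + 1 := by omega
  rw [hsub, gt_iff_lt, div_pow, div_pow, ← mul_div_assoc,
    div_lt_div_iff₀ (pow_pos (hPpos _) _) (pow_pos (hPpos _) _)]
  have hq := hQ m
  have key : P (m+2) ^ 2 * (P (m+1) ^ ((m+2)*(m+3)) * P (m+3) ^ ((m+2)*(m+1)))
      < P (m+2) ^ 2 * P (m+2) ^ (2*m^2+8*m+6) :=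
    mul_lt_mul_of_pos_left hq (pow_pos (hPpos _) 2)
  calc P (m+2) ^ 2 * P (m+3) ^ ((m+2)*(m+2-1)) * P (m+1) ^ ((m+2)*(m+2+1))
      = P (m+2) ^ 2 * (P (m+1) ^ ((m+2)*(m+3)) * P (m+3) ^ ((m+2)*(m+1))) := by
        rw [hsub]; ring
    _ < P (m+2) ^ 2 * P (m+2) ^ (2*m^2+8*m+6) := key
    _ = P (m+2) ^ ((m+2)*(m+2+1)) * P (m+2) ^ ((m+2)*(m+2-1)) := by
        rw [hsub]; ring
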